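/- Let a be a nonzero element of the prime subfield F_p ⊆ F_q, let b ∈ F_q^*, and let v ∈ Γ satisfy Tr_{q/t}(bv) = 0. If Tr(v^{p^t−1}) ≠ 0, then N(a,b) = p^{2m−2} − 1 + p^{m−2}(p−1) − p^{m+t−2} − p^{m−2}·S. -/

import Mathlib

open Finset

private lemma fiber_card_mul {V W : Type*} [AddCommGroup V] [Fintype V] [DecidableEq V]
    [AddCommGroup W] [Fintype W] [DecidableEq W]
    (f : V →+ W) (hf : Function.Surjective f) (c : W) :
    (univ.filter (fun x => f x = c)).card * Fintype.card W = Fintype.card V := by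
  have key : ∀ d : W, (univ.filter (fun x => f x = d)).card
      = (univ.filter (fun x => f x = c)).card := by
    intro d
    obtain ⟨x₀, hx₀⟩ := hf d
    obtain ⟨x₁, hx₁⟩ := hf c
    apply Finset.card_bij (fun x _ => x - x₀ + x₁)
    · intro x hx
      simp only [mem_filter, mem_univ, true_and] at hx ⊢
      simp [map_add, map_sub, hx, hx₀, hx₁]
    · intro x hx y hy hxy
      simpa using hxy
    · intro y hy
      simp only [mem_filter, mem_univ, true_and] at hy
      refine ⟨y - x₁ + x₀, ?_, by abel⟩
      simp only [mem_filter, mem_univ, true_and]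
      simp [map_add, map_sub, hy, hx₀, hx₁]
  have h1 : (univ : Finset V).card = ∑ d : W, (univ.filter (fun x => f x = d)).card :=
    Finset.card_eq_sum_card_fiberwise (fun x _ => mem_univ (f x))
  have h2 : Fintype.card V = ∑ d : W, (univ.filter (fun x => f x = d)).card := h1
  rw [h2, Finset.sum_congr rfl fun d _ => key d, Finset.sum_const, smul_eq_mul, mul_comm]
  rfl

private lemma surj_of_exists {p : ℕ} [Fact p.Prime] {V : Type*} [AddCommGroup V]
    (f : V →+ ZMod p) (h : ∃ x, f x ≠ 0) : Function.Surjective f := by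
  obtain ⟨x, hx⟩ := h
  intro e
  refine ⟨(e * (f x)⁻¹).val • x, ?_⟩
  rw [map_nsmul, nsmul_eq_mul, ZMod.natCast_val, ZMod.cast_id, mul_assoc,
    inv_mul_cancel₀ hx, mul_one]

private lemma zmod_sum_zeta {p : ℕ} [Fact p.Prime] {ζ : ℂ} (hζ : IsPrimitiveRoot ζ p) :
    ∑ u : ZMod p, ζ ^ u.val = 0 := by
  have hp : 1 < p := (Fact.out : p.Prime).one_lt
  rw [← hζ.geom_sum_eq_zero hp]
  apply Finset.sum_nbij' (fun u : ZMod p => u.val) (fun i : ℕ => (i : ZMod p))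
  · intro u _; exact mem_range.2 (ZMod.val_lt u)
  · intro i _; exact mem_univ _
  · intro u _; exact ZMod.natCast_val u |>.trans (ZMod.cast_id _ _)
  · intro i hi; exact ZMod.val_cast_of_lt (mem_range.1 hi)
  · intro u _; rfl

private lemma zmod_sum_zeta_ne {p : ℕ} [Fact p.Prime] {ζ : ℂ} (hζ : IsPrimitiveRoot ζ p)
    (c : ZMod p) :
    ∑ u ∈ ({0}ᶜ : Finset (ZMod p)), ζ ^ ((u * c).val) = if c = 0 then (p - 1 : ℂ) else -1 := by
  have hcard : ({0}ᶜ : Finset (ZMod p)).card = p - 1 := by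
    rw [Finset.card_compl, Finset.card_singleton, ZMod.card]
  by_cases hc : c = 0
  · simp only [hc, if_true, mul_zero, ZMod.val_zero, pow_zero]
    rw [Finset.sum_const, hcard, nsmul_eq_mul, mul_one]
    have hp : 1 ≤ p := (Fact.out : p.Prime).one_lt.le
    push_cast [Nat.cast_sub hp]
    ring
  · rw [if_neg hc]
    have h1 : ∑ u ∈ ({0}ᶜ : Finset (ZMod p)), ζ ^ ((u * c).val)
        = ∑ w ∈ ({0}ᶜ : Finset (ZMod p)), ζ ^ w.val := by
      apply Finset.sum_nbij' (fun u => u * c) (fun w => w * c⁻¹)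
      · intro u hu
        simp only [mem_compl, mem_singleton] at hu ⊢
        exact mul_ne_zero hu hc
      · intro w hw
        simp only [mem_compl, mem_singleton] at hw ⊢
        exact mul_ne_zero hw (inv_ne_zero hc)
      · intro u _; field_simp
      · intro w _; field_simp
      · intro u _; rfl
    rw [h1]
    have h2 : ∑ w ∈ ({0}ᶜ : Finset (ZMod p)), ζ ^ w.val
        = (∑ w : ZMod p, ζ ^ w.val) - ζ ^ (0 : ZMod p).val := by
      rw [← Finset.sum_compl_add_sum ({0} : Finset (ZMod p)) (fun w => ζ ^ w.val),
        Finset.sum_singleton]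
      ring
    rw [h2, zmod_sum_zeta hζ, ZMod.val_zero, pow_zero]
    ring

set_option maxHeartbeats 1000000 in
/-- **Statement 5.** For `a` a nonzero element of the prime subfield, `b ∈ F_q^*`, and
`v ∈ Γ` with `Tr_{q/t}(bv) = 0`: if `Tr(v^{p^t-1}) ≠ 0` then
`N(a,b) = p^{2m-2} - 1 + p^{m-2}(p-1) - p^{m+t-2} - p^{m-2}·S`. -/
theorem stmt6 (p t m : ℕ) [Fact p.Prime] (ht : 2 < t) (hm : m = 2 * t)
    (F : Type) [Field F] [Fintype F] [DecidableEq F] [Algebra (ZMod p) F]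
    (hF : Fintype.card F = p ^ m)
    (E : Subfield F) (hE : Nat.card E = p ^ t)
    (α : Fˣ) (hα : ∀ x : Fˣ, x ∈ Subgroup.zpowers α)
    (Γ : Set F) (hΓ : Γ = {v : F | ∃ j ≤ p ^ t, v = (α : F) ^ j})
    (ζ : ℂ) (hζ : ζ = Complex.exp (2 * Real.pi * Complex.I / p))
    (χ : F → ℂ) (hχ : ∀ x, χ x = ζ ^ (Algebra.trace (ZMod p) F x).val)
    (Δ : Finset F) (hΔ : Δ = univ.filter (fun x : F => x ^ (p ^ t + 1) = 1))
    (S : ℂ) (hS : S = ∑ z ∈ ({0}ᶜ : Finset (ZMod p)), ∑ x ∈ Δ, χ (algebraMap (ZMod p) F z * x))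
    (N : F → F → ℕ)
    (hN : ∀ a b : F, N a b = Set.ncard {xy : F × F | xy ≠ (0, 0) ∧
      Algebra.trace (ZMod p) F (xy.1 + xy.2 ^ (p ^ t - 1)) = 0 ∧
      Algebra.trace (ZMod p) F (a * xy.1 + b * xy.2) = 0})
    (z : ZMod p) (hz : z ≠ 0) (a : F) (ha : a = algebraMap (ZMod p) F z)
    (b : F) (hb : b ≠ 0)
    (v : F) (hv : v ∈ Γ) (hbv : Algebra.trace E F (b * v) = 0)
    (htr : Algebra.trace (ZMod p) F (v ^ (p ^ t - 1)) ≠ 0) :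
    (N a b : ℂ) = (p : ℂ) ^ (2 * m - 2) - 1
      + (p : ℂ) ^ (m - 2) * (p - 1) - (p : ℂ) ^ (m + t - 2)
      - (p : ℂ) ^ (m - 2) * S := by
  have hp : p.Prime := Fact.out
  have hp1 : 1 < p := hp.one_lt
  set n := p ^ t with hn
  have hn2 : 2 ≤ n := by
    calc 2 ≤ p ^ 1 := by simpa using hp.two_le
    _ ≤ p ^ t := Nat.pow_le_pow_right hp.pos (by omega)
  -- instances
  haveI hCharF : CharP F p := charP_of_injective_ringHom (algebraMap (ZMod p) F).injective p
  haveI hCharE : CharP E p := E.subtype.charP E.subtype.injective p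
  letI : Algebra (ZMod p) E := ZMod.algebra E p
  haveI : @IsScalarTower (ZMod p) E F Algebra.toSMul Algebra.toSMul Algebra.toSMul :=
    IsScalarTower.of_algebraMap_eq' (Subsingleton.elim _ _)
  haveI : Module.Finite (ZMod p) F := Module.Finite.of_finite
  haveI : Module.Finite (ZMod p) E := Module.Finite.of_finite
  haveI : Module.Finite E F := Module.Finite.of_finite
  letI : Fintype E := Fintype.ofFinite E
  have hEcard : Fintype.card E = n := by rw [← Nat.card_eq_fintype_card, hE]
  -- basic arithmetic
  have hnn' : (n + 1) * (n - 1) = n * n - 1 := by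
    have h1 : 1 ≤ n := by omega
    zify [h1, Nat.one_le_iff_ne_zero.mpr (by positivity : n * n ≠ 0)]
    ring
  -- the generator
  have hordα : orderOf α = n * n - 1 := by
    rw [orderOf_eq_card_of_forall_mem_zpowers hα, Nat.card_units, Nat.card_eq_fintype_card,
      hF, hm, hn, two_mul, pow_add]
  have hαne : (α : F) ≠ 0 := α.ne_zero
  have hpow1 : (α : F) ^ (n * n - 1) = 1 := by
    have h := pow_orderOf_eq_one α
    rw [hordα] at h
    have := congrArg (Units.val) h
    simpa using this
  have hinj : ∀ k₁ k₂ : ℕ, k₁ < n * n - 1 → k₂ < n * n - 1 →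
      (α : F) ^ k₁ = (α : F) ^ k₂ → k₁ = k₂ := by
    intro k1 k2 h1 h2 h
    have hu : α ^ k1 = α ^ k2 := Units.ext (by simpa using h)
    exact pow_injOn_Iio_orderOf (by simpa [hordα] using h1) (by simpa [hordα] using h2) hu
  have hexplt : ∀ j : ℕ, j ≤ n → j * (n - 1) < n * n - 1 := by
    intro j hj
    have h1 : j * (n - 1) ≤ n * (n - 1) := Nat.mul_le_mul_right _ hj
    have h2 : (n + 1) * (n - 1) = n * (n - 1) + (n - 1) := by ring
    omega
  -- Δ as an image
  have hΔsub : (range (n + 1)).image (fun j => (α : F) ^ (j * (n - 1))) ⊆ Δ := by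
    intro x hx
    simp only [mem_image, mem_range] at hx
    obtain ⟨j, hj, rfl⟩ := hx
    rw [hΔ, mem_filter]
    refine ⟨mem_univ _, ?_⟩
    rw [← pow_mul, mul_assoc, mul_comm (n - 1) (n + 1), hnn', mul_comm, pow_mul, hpow1,
      one_pow]
  have hΔinj : Set.InjOn (fun j => (α : F) ^ (j * (n - 1))) (range (n + 1)) := by
    intro j1 h1 j2 h2 h
    simp only [mem_coe, mem_range] at h1 h2
    have := hinj _ _ (hexplt j1 (by omega)) (hexplt j2 (by omega)) h
    have hn1 : (0:ℕ) < n - 1 := by omega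
    exact Nat.eq_of_mul_eq_mul_right hn1 this
  have hΔle : Δ.card ≤ n + 1 := by
    have h := Polynomial.card_nthRoots (n + 1) (1 : F)
    refine le_trans (Finset.card_le_card ?_) (le_trans (Multiset.toFinset_card_le _) h)
    intro x hx
    rw [hΔ, mem_filter] at hx
    rw [Multiset.mem_toFinset, Polynomial.mem_nthRoots (by omega)]
    exact hx.2
  have hΔim : Δ = (range (n + 1)).image (fun j => (α : F) ^ (j * (n - 1))) := by
    refine (Finset.eq_of_subset_of_card_le hΔsub ?_).symm
    rw [Finset.card_image_of_injOn hΔinj, Finset.card_range]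
    exact hΔle
  have hΔcard : Δ.card = n + 1 := by
    rw [hΔim, Finset.card_image_of_injOn hΔinj, Finset.card_range]
  -- primitive root
  have hprim : IsPrimitiveRoot ζ p := by
    rw [hζ]
    exact Complex.isPrimitiveRoot_exp p hp.ne_zero
  set T := Algebra.trace (ZMod p) F with hT
  set M := (univ.filter (fun y : F => z * T (y ^ (n - 1)) = T (b * y))).card with hMdef
  set K := (Δ.filter (fun x => T x = 0)).card with hKdef
  have hfib : ∀ c : ZMod p, (univ.filter (fun x : F => T x = c)).card = p ^ (m - 1) := by
    intro c
    have hsurj : Function.Surjective (T.toAddMonoidHom) := by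
      simpa using Algebra.trace_surjective (ZMod p) F
    have h := fiber_card_mul T.toAddMonoidHom hsurj c
    simp only [LinearMap.toAddMonoidHom_coe] at h
    rw [hF, ZMod.card] at h
    have h2 : p ^ (m - 1) * p = p ^ m := by
      rw [← pow_succ]
      congr 1
      omega
    rw [hT] at h
    exact Nat.eq_of_mul_eq_mul_right hp.pos (h.trans h2.symm)
  have stepA : N a b + 1 = p ^ (m - 1) * M := by
    have key : ∀ y : F, (univ.filter (fun x : F =>
        T x = - T (y ^ (n - 1)) ∧ z * T x = - T (b * y))).card
        = if z * T (y ^ (n - 1)) = T (b * y) then p ^ (m - 1) else 0 := by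
      intro y
      by_cases hcy : z * T (y ^ (n - 1)) = T (b * y)
      · rw [if_pos hcy]
        have heq : (univ.filter (fun x : F =>
            T x = - T (y ^ (n - 1)) ∧ z * T x = - T (b * y)))
            = (univ.filter (fun x : F => T x = - T (y ^ (n - 1)))) := by
          apply Finset.filter_congr
          intro x _
          exact ⟨fun h => h.1, fun h => ⟨h, by rw [h, mul_neg, hcy]⟩⟩
        rw [heq, hfib]
      · rw [if_neg hcy, Finset.card_eq_zero, Finset.filter_eq_empty_iff]
        rintro x - ⟨h1, h2⟩
        apply hcy
        rw [h1, mul_neg, neg_inj] at h2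
        exact h2
    have hN1 : N a b = (univ.filter (fun xy : F × F => xy ≠ (0, 0) ∧
        T (xy.1 + xy.2 ^ (n - 1)) = 0 ∧ T (a * xy.1 + b * xy.2) = 0)).card := by
      rw [hN a b, ← Set.ncard_coe_finset]
      congr 1
      ext xy
      simp [hT]
    have hset : N a b + 1 = (univ.filter (fun xy : F × F =>
        T (xy.1 + xy.2 ^ (n - 1)) = 0 ∧ T (a * xy.1 + b * xy.2) = 0)).card := by
      rw [hN1]
      have h00 : ((0, 0) : F × F) ∉ (univ.filter (fun xy : F × F => xy ≠ (0, 0) ∧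
          T (xy.1 + xy.2 ^ (n - 1)) = 0 ∧ T (a * xy.1 + b * xy.2) = 0)) := by
        simp
      rw [← Finset.card_insert_of_notMem h00]
      congr 1
      ext xy
      simp only [Finset.mem_insert, mem_filter, mem_univ, true_and]
      by_cases hxy : xy = (0, 0)
      · subst hxy
        simp [zero_pow (show n - 1 ≠ 0 by omega)]
      · have hxy0 : ¬ xy = 0 := by simpa [Prod.ext_iff] using hxy
        simp [hxy0, hxy]
    rw [hset]
    have hpred : (univ.filter (fun xy : F × F =>
        T (xy.1 + xy.2 ^ (n - 1)) = 0 ∧ T (a * xy.1 + b * xy.2) = 0))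
        = (univ.filter (fun xy : F × F =>
        T xy.1 = - T (xy.2 ^ (n - 1)) ∧ z * T xy.1 = - T (b * xy.2))) := by
      apply Finset.filter_congr
      intro xy _
      have haT : T (a * xy.1) = z * T xy.1 := by
        rw [ha, ← Algebra.smul_def, map_smul, smul_eq_mul]
      rw [map_add, map_add, haT, add_eq_zero_iff_eq_neg, add_eq_zero_iff_eq_neg]
    rw [hpred, Finset.card_filter, Fintype.sum_prod_type, Finset.sum_comm]
    have hinner : ∀ y : F, (∑ x : F, if T x = - T (y ^ (n - 1)) ∧ z * T x = - T (b * y)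
        then 1 else 0) = if z * T (y ^ (n - 1)) = T (b * y) then p ^ (m - 1) else 0 := by
      intro y
      rw [← Finset.card_filter, key y]
    rw [Finset.sum_congr rfl fun y _ => hinner y, Finset.sum_ite, Finset.sum_const,
      Finset.sum_const, smul_eq_mul, smul_zero, add_zero, mul_comm, hMdef]

  have stepB : (M : ℂ) = 1 + (p : ℂ) ^ t * (p : ℂ) ^ (t - 1) - K := by
    obtain ⟨jv, hjvle, hjveq⟩ : ∃ j ≤ n, v = (α : F) ^ j := by
      rw [hΓ] at hv; exact hv
    have hvne : v ≠ 0 := by rw [hjveq]; exact pow_ne_zero _ hαne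
    have hEpow : ∀ c : E, c ^ n = c := by
      intro c
      rw [← hEcard]
      exact FiniteField.pow_card c
    have hcoe_pow : ∀ c : E, c ≠ 0 → ((c : F)) ^ (n - 1) = 1 := by
      intro c hc
      have h2 : (c : F) ^ n = (c : F) := by
        have h := congrArg (fun x : E => (x : F)) (hEpow c)
        push_cast at h
        exact h
      have hc' : (c : F) ≠ 0 := by simpa using hc
      have h3 : (c : F) ^ (n - 1) * (c : F) = 1 * (c : F) := by
        rw [one_mul, ← pow_succ, Nat.sub_add_cancel (by omega)]
        exact h2
      exact mul_right_cancel₀ hc' h3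
    -- `E^*` as powers of `α^(n+1)`
    have hordβ : orderOf (α ^ (n + 1)) = n - 1 := by
      rw [orderOf_pow' α (by omega : n + 1 ≠ 0), hordα, ← hnn',
        Nat.gcd_eq_right (dvd_mul_right (n + 1) (n - 1)),
        Nat.mul_div_cancel_left _ (by omega : 0 < n + 1)]
    have hβinj : ∀ i1 i2 : ℕ, i1 < n - 1 → i2 < n - 1 →
        (α : F) ^ ((n + 1) * i1) = (α : F) ^ ((n + 1) * i2) → i1 = i2 := by
      intro i1 i2 h1 h2 h
      have h' : (α ^ (n + 1)) ^ i1 = (α ^ (n + 1)) ^ i2 := by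
        apply Units.ext
        simpa [pow_mul] using h
      exact pow_injOn_Iio_orderOf (by simpa [hordβ] using h1) (by simpa [hordβ] using h2) h'
    have hexp2 : ∀ j i : ℕ, ((α : F) ^ (j + (n + 1) * i)) ^ (n - 1) = (α : F) ^ (j * (n - 1)) := by
      intro j i
      rw [← pow_mul]
      have hexp : (j + (n + 1) * i) * (n - 1) = j * (n - 1) + (n * n - 1) * i := by
        rw [add_mul]
        congr 1
        rw [← hnn']
        ring
      rw [hexp, pow_add, pow_mul, pow_mul, hpow1, one_pow, mul_one]
    -- Estar
    have himβ : (range (n - 1)).image (fun i => (α : F) ^ ((n + 1) * i))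
        = univ.filter (fun x : F => x ^ (n - 1) = 1) := by
      apply Finset.eq_of_subset_of_card_le
      · intro x hx
        simp only [mem_image, mem_range] at hx
        obtain ⟨i, hi, rfl⟩ := hx
        simp only [mem_filter, mem_univ, true_and]
        have := hexp2 0 i
        simpa using this
      · have hle : (univ.filter (fun x : F => x ^ (n - 1) = 1)).card ≤ n - 1 := by
          have h := Polynomial.card_nthRoots (n - 1) (1 : F)
          refine le_trans (Finset.card_le_card ?_) (le_trans (Multiset.toFinset_card_le _) h)
          intro x hx
          rw [mem_filter] at hx
          rw [Multiset.mem_toFinset, Polynomial.mem_nthRoots (by omega : 0 < n - 1)]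
          exact hx.2
        rw [Finset.card_image_of_injOn (fun i1 h1 i2 h2 h =>
          hβinj i1 i2 (mem_range.1 h1) (mem_range.1 h2) h), Finset.card_range]
        exact hle
    have hEcoe_im : univ.filter (fun x : F => x ^ (n - 1) = 1)
        = ((univ : Finset E).filter (fun c : E => c ≠ 0)).image (fun c : E => (c : F)) := by
      symm
      apply Finset.eq_of_subset_of_card_le
      · intro x hx
        simp only [mem_image, mem_filter, mem_univ, true_and] at hx
        obtain ⟨c, hc, rfl⟩ := hx
        simp only [mem_filter, mem_univ, true_and]
        exact hcoe_pow c hc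
      · rw [Finset.card_image_of_injOn (Subtype.coe_injective.injOn)]
        have h1 : ((univ : Finset E).filter (fun c : E => c ≠ 0)) = ({0} : Finset E)ᶜ := by
          ext c; simp
        rw [h1, Finset.card_compl, Finset.card_singleton, hEcard, ← himβ,
          Finset.card_image_of_injOn (fun i1 h1 i2 h2 h =>
            hβinj i1 i2 (mem_range.1 h1) (mem_range.1 h2) h), Finset.card_range]
    have halg : ∀ c : E, (algebraMap E F) c = (c : F) := fun c => rfl
    have hbv0 : ∀ c : E, T (b * v * (c : F)) = 0 := by
      intro c
      have h1 : b * v * (c : F) = c • (b * v) := by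
        rw [Algebra.smul_def, halg, mul_comm]
      rw [hT, ← Algebra.trace_trace (S := E), h1, map_smul, hbv, smul_zero, map_zero]
    -- kernel of the relative trace
    have hKf : (univ.filter (fun x : F => Algebra.trace E F x = 0)).card = n := by
      have hsurjEF : Function.Surjective ((Algebra.trace E F).toAddMonoidHom) := by
        simpa using Algebra.trace_surjective E F
      have h := fiber_card_mul (Algebra.trace E F).toAddMonoidHom hsurjEF 0
      simp only [LinearMap.toAddMonoidHom_coe] at h
      rw [hEcard, hF] at h
      have h2 : p ^ m = n * n := by rw [hm, hn, two_mul, pow_add]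
      rw [h2] at h
      exact Nat.eq_of_mul_eq_mul_right (by omega : 0 < n) h
    have hIm : (univ : Finset E).image (fun c : E => (c : F) * (b * v))
        = univ.filter (fun x : F => Algebra.trace E F x = 0) := by
      apply Finset.eq_of_subset_of_card_le
      · intro x hx
        simp only [mem_image, mem_univ, true_and] at hx
        obtain ⟨c, rfl⟩ := hx
        simp only [mem_filter, mem_univ, true_and]
        have h1 : (c : F) * (b * v) = c • (b * v) := by rw [Algebra.smul_def, halg]
        rw [h1, map_smul, hbv, smul_zero]
      · rw [hKf, Finset.card_image_of_injOn, Finset.card_univ, hEcard]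
        intro c1 _ c2 _ h
        have hbv_ne : b * v ≠ 0 := mul_ne_zero hb hvne
        exact Subtype.coe_injective (mul_right_cancel₀ hbv_ne h)
    have hψne : ∀ j : ℕ, j ≤ n → j ≠ jv → ∃ c : E, T (b * (α : F) ^ j * (c : F)) ≠ 0 := by
      intro j hj hjne
      by_contra hcon
      push_neg at hcon
      have hw : Algebra.trace E F (b * (α : F) ^ j) = 0 := by
        by_contra hw
        obtain ⟨u, hu⟩ := Algebra.trace_surjective (ZMod p) E 1
        set w := Algebra.trace E F (b * (α : F) ^ j) with hwdef
        have hc := hcon (u * w⁻¹)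
        have h1 : b * (α : F) ^ j * (((u * w⁻¹ : E) : F)) = (u * w⁻¹ : E) • (b * (α : F) ^ j) := by
          rw [Algebra.smul_def, halg, mul_comm]
        rw [hT, ← Algebra.trace_trace (S := E), h1, map_smul, ← hwdef,
          smul_eq_mul, mul_assoc, inv_mul_cancel₀ hw, mul_one, hu] at hc
        exact one_ne_zero hc
      have hmem : b * (α : F) ^ j ∈ (univ : Finset E).image (fun c : E => (c : F) * (b * v)) := by
        rw [hIm]
        simp only [mem_filter, mem_univ, true_and]
        exact hw
      simp only [mem_image, mem_univ, true_and] at hmem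
      obtain ⟨c, hc⟩ := hmem
      have hcne : c ≠ 0 := by
        rintro rfl
        simp only [ZeroMemClass.coe_zero, zero_mul] at hc
        exact (mul_ne_zero hb (pow_ne_zero _ hαne)) hc.symm
      have hgv : (α : F) ^ j = (c : F) * v := by
        have h2 : (c : F) * (b * v) = b * ((c : F) * v) := by ring
        rw [h2] at hc
        exact (mul_left_cancel₀ hb hc).symm
      have hpow : (α : F) ^ (j * (n - 1)) = (α : F) ^ (jv * (n - 1)) := by
        rw [pow_mul, pow_mul, hgv, mul_pow, hcoe_pow c hcne, one_mul, hjveq]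
      exact hjne (Nat.eq_of_mul_eq_mul_right (by omega : 0 < n - 1)
        (hinj _ _ (hexplt j hj) (hexplt jv hjvle) hpow))
    -- the inner count
    have hcount : ∀ j : ℕ, j ≤ n →
        ((range (n - 1)).filter (fun i =>
          z * T ((α : F) ^ (j * (n - 1))) = T (b * (α : F) ^ j * (α : F) ^ ((n + 1) * i)))).card
        = if j = jv then 0 else
            (p ^ (t - 1) - if T ((α : F) ^ (j * (n - 1))) = 0 then 1 else 0) := by
      intro j hj
      have htrans : ((range (n - 1)).filter (fun i =>
          z * T ((α : F) ^ (j * (n - 1))) = T (b * (α : F) ^ j * (α : F) ^ ((n + 1) * i)))).card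
          = ((univ : Finset E).filter (fun c : E => c ≠ 0 ∧
            z * T ((α : F) ^ (j * (n - 1))) = T (b * (α : F) ^ j * (c : F)))).card := by
        have e1 : (((range (n - 1)).image (fun i => (α : F) ^ ((n + 1) * i))).filter
            (fun x => z * T ((α : F) ^ (j * (n - 1))) = T (b * (α : F) ^ j * x))).card
            = ((range (n - 1)).filter (fun i =>
              z * T ((α : F) ^ (j * (n - 1))) = T (b * (α : F) ^ j * (α : F) ^ ((n + 1) * i)))).card := by
          rw [Finset.filter_image]
          exact Finset.card_image_of_injOn (fun i1 h1 i2 h2 h =>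
            hβinj i1 i2 (mem_range.1 (mem_of_mem_filter _ h1))
              (mem_range.1 (mem_of_mem_filter _ h2)) h)
        have e2 : ((((univ : Finset E).filter (fun c : E => c ≠ 0)).image
            (fun c : E => (c : F))).filter
            (fun x => z * T ((α : F) ^ (j * (n - 1))) = T (b * (α : F) ^ j * x))).card
            = ((univ : Finset E).filter (fun c : E => c ≠ 0 ∧
              z * T ((α : F) ^ (j * (n - 1))) = T (b * (α : F) ^ j * (c : F)))).card := by
          rw [Finset.filter_image, Finset.card_image_of_injOn
            (Subtype.coe_injective.injOn.mono (Set.subset_univ _)),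
            Finset.filter_filter]
        rw [← e1, himβ, hEcoe_im, e2]
      rw [htrans]
      by_cases hjv' : j = jv
      · rw [if_pos hjv']
        rw [Finset.card_eq_zero, Finset.filter_eq_empty_iff]
        rintro c - ⟨hc0, hceq⟩
        subst hjv'
        have h1 : T (b * (α : F) ^ j * (c : F)) = 0 := by
          rw [show b * (α : F) ^ j = b * v by rw [hjveq]]
          exact hbv0 c
        have h2 : T ((α : F) ^ (j * (n - 1))) ≠ 0 := by
          rw [pow_mul, ← hjveq]
          exact htr
        rw [h1] at hceq
        exact h2 ((mul_eq_zero.mp hceq).resolve_left hz)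
      · rw [if_neg hjv']
        set ψ : E →+ ZMod p :=
          { toFun := fun c => T (b * (α : F) ^ j * (c : F)),
            map_zero' := by simp,
            map_add' := by
              intro c d
              push_cast
              rw [mul_add, map_add] } with hψdef
        have hψsurj : Function.Surjective ψ := surj_of_exists ψ (hψne j hj hjv')
        have hfibE : ∀ e : ZMod p,
            ((univ : Finset E).filter (fun c => ψ c = e)).card = p ^ (t - 1) := by
          intro e
          have h := fiber_card_mul ψ hψsurj e
          rw [hEcard, ZMod.card, hn] at h
          have h2 : p ^ (t - 1) * p = p ^ t := by
            rw [← pow_succ]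
            congr 1
            omega
          exact Nat.eq_of_mul_eq_mul_right hp.pos (h.trans h2.symm)
        have hψc : ∀ c : E, ψ c = T (b * (α : F) ^ j * (c : F)) := fun c => rfl
        by_cases he : T ((α : F) ^ (j * (n - 1))) = 0
        · rw [if_pos he]
          have hfe : ((univ : Finset E).filter (fun c : E => c ≠ 0 ∧
              z * T ((α : F) ^ (j * (n - 1))) = T (b * (α : F) ^ j * (c : F))))
              = ((univ : Finset E).filter (fun c => ψ c = 0)).erase 0 := by
            ext c
            simp only [mem_filter, mem_univ, true_and, Finset.mem_erase, hψc, he, mul_zero]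
            tauto
          rw [hfe, Finset.card_erase_of_mem, hfibE]
          simp only [mem_filter, mem_univ, true_and]
          rw [hψc]
          simp
        · rw [if_neg he, Nat.sub_zero]
          have hfe : ((univ : Finset E).filter (fun c : E => c ≠ 0 ∧
              z * T ((α : F) ^ (j * (n - 1))) = T (b * (α : F) ^ j * (c : F))))
              = ((univ : Finset E).filter (fun c =>
                ψ c = z * T ((α : F) ^ (j * (n - 1))))) := by
            ext c
            simp only [mem_filter, mem_univ, true_and, hψc]
            constructor
            · rintro ⟨-, h⟩; exact h.symm
            · intro h
              refine ⟨?_, h.symm⟩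
              rintro rfl
              simp only [ZeroMemClass.coe_zero, mul_zero, map_zero] at h
              exact he ((mul_eq_zero.mp h.symm).resolve_left hz)
          rw [hfe, hfibE]
    -- split off y = 0
    have hM0 : M = (univ.filter (fun y : F => y ≠ 0 ∧ z * T (y ^ (n - 1)) = T (b * y))).card
        + 1 := by
      rw [hMdef]
      have hseteq : univ.filter (fun y : F => z * T (y ^ (n - 1)) = T (b * y))
          = insert (0 : F) (univ.filter (fun y : F => y ≠ 0 ∧
            z * T (y ^ (n - 1)) = T (b * y))) := by
        ext y
        by_cases hy : y = 0
        · subst hy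
          simp [zero_pow (show n - 1 ≠ 0 by omega)]
        · simp [hy]
      rw [hseteq, Finset.card_insert_of_notMem (by simp)]
    -- the bijection onto the product
    have hbij : (univ.filter (fun y : F => y ≠ 0 ∧ z * T (y ^ (n - 1)) = T (b * y))).card
        = (((range (n + 1)) ×ˢ (range (n - 1))).filter (fun ji : ℕ × ℕ =>
            z * T ((α : F) ^ (ji.1 * (n - 1)))
              = T (b * (α : F) ^ ji.1 * (α : F) ^ ((n + 1) * ji.2)))).card := by
      symm
      apply Finset.card_bij (fun ji _ => (α : F) ^ (ji.1 + (n + 1) * ji.2))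
      · rintro ⟨j, i⟩ hji
        simp only [mem_filter, mem_product, mem_range] at hji
        obtain ⟨⟨hj, hi⟩, hcond⟩ := hji
        simp only [mem_filter, mem_univ, true_and]
        refine ⟨pow_ne_zero _ hαne, ?_⟩
        rw [hexp2 j i, pow_add, ← mul_assoc]
        exact hcond
      · rintro ⟨j1, i1⟩ h1 ⟨j2, i2⟩ h2 h
        simp only [mem_filter, mem_product, mem_range] at h1 h2
        have hbound : ∀ j i : ℕ, j < n + 1 → i < n - 1 → j + (n + 1) * i < n * n - 1 := by
          intro j i hjlt hilt
          calc j + (n + 1) * i < (n + 1) + (n + 1) * (n - 2) :=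
                add_lt_add_of_lt_of_le hjlt (Nat.mul_le_mul_left _ (by omega))
            _ = (n + 1) * (n - 1) := by
                rw [show n - 1 = (n - 2) + 1 from by omega, mul_add, mul_one, Nat.add_comm]
            _ = n * n - 1 := hnn'
        have hkeq := hinj _ _ (hbound j1 i1 h1.1.1 h1.1.2) (hbound j2 i2 h2.1.1 h2.1.2) h
        have hjeq : j1 = j2 := by
          have hc := congrArg (· % (n + 1)) hkeq
          simpa [Nat.add_mul_mod_self_left, Nat.mod_eq_of_lt h1.1.1,
            Nat.mod_eq_of_lt h2.1.1] using hc
        subst hjeq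
        have hieq : i1 = i2 :=
          Nat.eq_of_mul_eq_mul_left (by omega : 0 < n + 1) (by omega)
        rw [hieq]
      · intro y hy
        simp only [mem_filter, mem_univ, true_and] at hy
        obtain ⟨hyne, hycond⟩ := hy
        obtain ⟨k0, hk0⟩ : ∃ k : ℕ, α ^ k = Units.mk0 y hyne := by
          have hz1 := (mem_powers_iff_mem_zpowers).mpr (hα (Units.mk0 y hyne))
          exact (Submonoid.mem_powers_iff _ _).mp hz1
        have hQpos : 0 < n * n - 1 := by
          rw [← hnn']
          exact Nat.mul_pos (by omega) (by omega)
        have hklt : k0 % (n * n - 1) < n * n - 1 := Nat.mod_lt _ hQpos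
        have hky : (α : F) ^ (k0 % (n * n - 1)) = y := by
          have h1 : α ^ (k0 % (n * n - 1)) = α ^ k0 := by
            rw [← hordα]
            exact pow_mod_orderOf α k0
          have h2 := congrArg Units.val (h1.trans hk0)
          simpa using h2
        set k := k0 % (n * n - 1) with hkdef
        refine ⟨(k % (n + 1), k / (n + 1)), ?_, ?_⟩
        · simp only [mem_filter, mem_product, mem_range]
          have hmod : k % (n + 1) < n + 1 := Nat.mod_lt _ (by omega)
          have hdiv : k / (n + 1) < n - 1 := by
            rw [Nat.div_lt_iff_lt_mul (by omega : 0 < n + 1)]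
            calc k < n * n - 1 := hklt
              _ = (n - 1) * (n + 1) := by rw [← hnn']; ring
          refine ⟨⟨hmod, hdiv⟩, ?_⟩
          have hyk : (α : F) ^ (k % (n + 1) + (n + 1) * (k / (n + 1))) = y := by
            rw [Nat.mod_add_div]
            exact hky
          have hrw1 : (α : F) ^ ((k % (n + 1)) * (n - 1)) = y ^ (n - 1) := by
            rw [← hexp2 (k % (n + 1)) (k / (n + 1)), hyk]
          have hrw2 : b * (α : F) ^ (k % (n + 1)) * (α : F) ^ ((n + 1) * (k / (n + 1)))
              = b * y := by
            rw [mul_assoc, ← pow_add, hyk]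
          rw [hrw1, hrw2]
          exact hycond
        · rw [Nat.mod_add_div]
          exact hky
    have hsum : (((range (n + 1)) ×ˢ (range (n - 1))).filter (fun ji : ℕ × ℕ =>
        z * T ((α : F) ^ (ji.1 * (n - 1)))
          = T (b * (α : F) ^ ji.1 * (α : F) ^ ((n + 1) * ji.2)))).card
        = ∑ j ∈ range (n + 1), ((range (n - 1)).filter (fun i =>
            z * T ((α : F) ^ (j * (n - 1)))
              = T (b * (α : F) ^ j * (α : F) ^ ((n + 1) * i)))).card := by
      rw [Finset.card_filter, Finset.sum_product]
      exact Finset.sum_congr rfl fun j _ => (Finset.card_filter _ _).symm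
    have hMeq : M = (∑ j ∈ range (n + 1), if j = jv then 0 else
        (p ^ (t - 1) - if T ((α : F) ^ (j * (n - 1))) = 0 then 1 else 0)) + 1 := by
      rw [hM0, hbij, hsum]
      congr 1
      exact Finset.sum_congr rfl fun j hj => hcount j (by
        have := mem_range.1 hj
        omega)
    -- move to ℂ
    have hMC : (M : ℂ) = (∑ j ∈ range (n + 1), if j = jv then (0 : ℂ) else
        ((p : ℂ) ^ (t - 1) - if T ((α : F) ^ (j * (n - 1))) = 0 then 1 else 0)) + 1 := by
      rw [hMeq]
      push_cast
      congr 1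
      apply Finset.sum_congr rfl
      intro j _
      by_cases h1 : j = jv
      · simp [h1]
      · rw [if_neg h1, if_neg h1]
        have hple : 1 ≤ p ^ (t - 1) := Nat.one_le_pow _ _ hp.pos
        by_cases h2 : T ((α : F) ^ (j * (n - 1))) = 0
        · rw [if_pos h2, if_pos h2, Nat.cast_sub hple]
          push_cast
          ring
        · rw [if_neg h2, if_neg h2, Nat.sub_zero]
          push_cast
          ring
    have hKsum : (K : ℂ) = ∑ j ∈ range (n + 1),
        (if T ((α : F) ^ (j * (n - 1))) = 0 then (1 : ℂ) else 0) := by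
      rw [hKdef, hΔim, Finset.filter_image, Finset.card_image_of_injOn
        (hΔinj.mono (by intro x hx; exact mem_coe.2 (mem_of_mem_filter _ (mem_coe.1 hx)))),
        Finset.card_filter]
      push_cast
      apply Finset.sum_congr rfl
      intro j _
      split <;> simp
    have hjvmem : jv ∈ range (n + 1) := mem_range.2 (by omega)
    have hindjv : (if T ((α : F) ^ (jv * (n - 1))) = 0 then (1 : ℂ) else 0) = 0 := by
      rw [if_neg]
      rw [pow_mul, ← hjveq]
      exact htr
    rw [hMC, Finset.sum_eq_sum_sdiff_singleton_add hjvmem, if_pos rfl, add_zero]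
    have hcongr : ∑ j ∈ range (n + 1) \ {jv}, (if j = jv then (0 : ℂ) else
        ((p : ℂ) ^ (t - 1) - if T ((α : F) ^ (j * (n - 1))) = 0 then 1 else 0))
        = ∑ j ∈ range (n + 1) \ {jv},
          ((p : ℂ) ^ (t - 1) - if T ((α : F) ^ (j * (n - 1))) = 0 then 1 else 0) := by
      apply Finset.sum_congr rfl
      intro j hj
      rw [if_neg (by simp only [Finset.mem_sdiff, Finset.mem_singleton] at hj; exact hj.2)]
    rw [hcongr, Finset.sum_sub_distrib, Finset.sum_const,
      Finset.card_sdiff_of_subset (by simpa using hjvmem), Finset.card_range, Finset.card_singleton]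
    have hdiffsum : ∑ j ∈ range (n + 1) \ {jv},
        (if T ((α : F) ^ (j * (n - 1))) = 0 then (1 : ℂ) else 0)
        = ∑ j ∈ range (n + 1), (if T ((α : F) ^ (j * (n - 1))) = 0 then (1 : ℂ) else 0) := by
      rw [Finset.sum_eq_sum_sdiff_singleton_add hjvmem
        (fun j => if T ((α : F) ^ (j * (n - 1))) = 0 then (1 : ℂ) else 0), hindjv, add_zero]
    rw [hdiffsum, ← hKsum, nsmul_eq_mul]
    have hncast : ((n + 1 - 1 : ℕ) : ℂ) = (p : ℂ) ^ t := by
      rw [show n + 1 - 1 = n from rfl, hn]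
      push_cast
      ring
    rw [hncast]
    ring

  have stepC : (p : ℂ) * K = S + (p : ℂ) ^ t + 1 := by
    have hSK : S = ∑ x ∈ Δ, (if T x = 0 then (p - 1 : ℂ) else -1) := by
      rw [hS, Finset.sum_comm]
      apply Finset.sum_congr rfl
      intro x _
      have hterm : ∀ u : ZMod p, χ (algebraMap (ZMod p) F u * x) = ζ ^ ((u * T x).val) := by
        intro u
        rw [hχ]
        congr 2
        rw [← Algebra.smul_def, map_smul, smul_eq_mul]
      rw [Finset.sum_congr rfl fun u _ => hterm u, zmod_sum_zeta_ne hprim]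
    have hsplit : K + (Δ.filter (fun x => ¬ T x = 0)).card = n + 1 := by
      rw [hKdef, Finset.card_filter_add_card_filter_not, hΔcard]
    have hS2 : S = (K : ℂ) * (p - 1) + ((Δ.filter (fun x => ¬ T x = 0)).card : ℂ) * (-1) := by
      rw [hSK, Finset.sum_ite, Finset.sum_const, Finset.sum_const, nsmul_eq_mul, nsmul_eq_mul,
        hKdef]
    have hc := congrArg (Nat.cast : ℕ → ℂ) hsplit
    rw [hn] at hc
    push_cast at hc
    linear_combination (-1 : ℂ) * hS2 + hc

  -- final assembly
  have hNC : (N a b : ℂ) = (p : ℂ) ^ (m - 1) * M - 1 := by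
    have := congrArg (Nat.cast : ℕ → ℂ) stepA
    push_cast at this
    linear_combination this
  have hpt : (p : ℂ) ^ t = p * p ^ (t - 1) := by
    rw [← pow_succ']
    congr 1
    omega
  rw [hpt] at stepC stepB
  rw [hNC, stepB,
    show m - 1 = (m - 2) + 1 from by omega,
    show 2 * m - 2 = ((m - 2) + (t - 1)) + ((t - 1) + 2) from by omega,
    show m + t - 2 = ((m - 2) + (t - 1)) + 1 from by omega,
    pow_add, pow_add, pow_add, pow_add]
  linear_combination (-(p : ℂ) ^ (m - 2)) * stepC
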